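/- Every disjoint n-family is a Schröder n-family: if (P_0,...,P_{n-1}) are Schröder-type paths with P_i from (i,0) to (0,i) and pairwise disjoint supports, then every point (k,l) on P_i satisfies k+l ≥ i. -/

import Mathlib

lemma schroder_step_cases {u v : ℤ × ℤ}
    (h : v - u = ((0:ℤ), (1:ℤ)) ∨ v - u = (-1, 1) ∨ v - u = (-1, 0)) :
    (v.1 = u.1 ∧ v.2 = u.2 + 1) ∨ (v.1 = u.1 - 1 ∧ v.2 = u.2 + 1) ∨
      (v.1 = u.1 - 1 ∧ v.2 = u.2) := by
  rcases h with h | h | h <;>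
  · have h1 := congrArg Prod.fst h
    have h2 := congrArg Prod.snd h
    simp [Prod.fst_sub, Prod.snd_sub] at h1 h2
    omega

lemma schroder_mono_head :
    ∀ (p : List (ℤ × ℤ)),
      (p.Chain' fun u v => v - u = (0, 1) ∨ v - u = (-1, 1) ∨ v - u = (-1, 0)) →
      ∀ h, p.head? = some h → ∀ w ∈ p, w.1 ≤ h.1 ∧ h.2 ≤ w.2 := by
  intro p
  induction p with
  | nil => simp
  | cons u rest ih =>
    intro hc h hh w hw
    simp only [List.head?_cons, Option.some.injEq] at hh
    subst hh
    rcases List.mem_cons.mp hw with rfl | hw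
    · exact ⟨le_refl _, le_refl _⟩
    · cases rest with
      | nil => simp at hw
      | cons v rest' =>
        rw [List.Chain', List.isChain_cons_cons] at hc
        have hstep := schroder_step_cases hc.1
        have := ih hc.2 v rfl w hw
        omega

lemma schroder_mono_last :
    ∀ (p : List (ℤ × ℤ)),
      (p.Chain' fun u v => v - u = (0, 1) ∨ v - u = (-1, 1) ∨ v - u = (-1, 0)) →
      ∀ t, p.getLast? = some t → ∀ w ∈ p, t.1 ≤ w.1 ∧ w.2 ≤ t.2 := by
  intro p
  induction p with
  | nil => simp
  | cons u rest ih =>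
    intro hc t ht w hw
    cases rest with
    | nil =>
      simp at ht hw
      subst ht; subst hw
      exact ⟨le_refl _, le_refl _⟩
    | cons v rest' =>
      rw [List.getLast?_cons_cons] at ht
      rw [List.Chain', List.isChain_cons_cons] at hc
      have hstep := schroder_step_cases hc.1
      have hv := ih hc.2 t ht v (List.mem_cons_self)
      rcases List.mem_cons.mp hw with rfl | hw
      · omega
      · exact ih hc.2 t ht w hw

lemma schroder_coverage :
    ∀ (p : List (ℤ × ℤ)),
      (p.Chain' fun u v => v - u = (0, 1) ∨ v - u = (-1, 1) ∨ v - u = (-1, 0)) →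
      ∀ h, p.head? = some h → ∀ t, p.getLast? = some t →
      ∀ c : ℤ, t.1 ≤ c → c ≤ h.1 → ∃ w ∈ p, w.1 = c := by
  intro p
  induction p with
  | nil => simp
  | cons u rest ih =>
    intro hc h hh t ht c hc1 hc2
    simp only [List.head?_cons, Option.some.injEq] at hh
    subst hh
    cases rest with
    | nil =>
      simp at ht
      subst ht
      exact ⟨u, List.mem_cons_self, by omega⟩
    | cons v rest' =>
      rw [List.getLast?_cons_cons] at ht
      rw [List.Chain', List.isChain_cons_cons] at hc
      have hstep := schroder_step_cases hc.1
      by_cases hcv : c ≤ v.1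
      · obtain ⟨w, hw, hw1⟩ := ih hc.2 v rfl t ht c hc1 hcv
        exact ⟨w, List.mem_cons_of_mem _ hw, hw1⟩
      · exact ⟨u, List.mem_cons_self, by omega⟩

lemma schroder_cross :
    ∀ (p : List (ℤ × ℤ)),
      (p.Chain' fun u v => v - u = (0, 1) ∨ v - u = (-1, 1) ∨ v - u = (-1, 0)) →
      ∀ w1 ∈ p, ∀ w2 ∈ p, w2.1 < w1.1 → w1.2 ≤ w2.2 := by
  intro p
  induction p with
  | nil => simp
  | cons u rest ih =>
    intro hc w1 hw1 w2 hw2 hlt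
    rcases List.mem_cons.mp hw1 with rfl | hw1'
    · have := schroder_mono_head _ hc w1 rfl w2 hw2
      omega
    · rcases List.mem_cons.mp hw2 with rfl | hw2'
      · have := schroder_mono_head _ hc w2 rfl w1 hw1
        omega
      · exact ih hc.tail w1 hw1' w2 hw2' hlt

lemma schroder_propagate (Q : List (ℤ × ℤ)) (jv : ℤ)
    (hQchain : Q.Chain' fun u v => v - u = (0, 1) ∨ v - u = (-1, 1) ∨ v - u = (-1, 0))
    (hQcover : ∀ c : ℤ, 0 ≤ c → c ≤ jv → ∃ w ∈ Q, w.1 = c)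
    (hQub : ∀ w ∈ Q, w.1 ≤ jv) :
    ∀ (r : List (ℤ × ℤ)),
      (r.Chain' fun u v => v - u = (0, 1) ∨ v - u = (-1, 1) ∨ v - u = (-1, 0)) →
      (∀ w ∈ r, 0 ≤ w.1 ∧ w ∉ Q) →
      ∀ h, r.head? = some h → (∃ w ∈ Q, w.1 = h.1 ∧ h.2 < w.2) →
      ∀ t, r.getLast? = some t → ∃ w ∈ Q, w.1 = t.1 ∧ t.2 < w.2 := by
  intro r
  induction r with
  | nil => simp
  | cons u rest ih =>
    intro hc hmem h hh hI t ht
    simp only [List.head?_cons, Option.some.injEq] at hh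
    subst hh
    cases rest with
    | nil =>
      simp at ht
      subst ht
      exact hI
    | cons v rest' =>
      rw [List.getLast?_cons_cons] at ht
      rw [List.Chain', List.isChain_cons_cons] at hc
      have hstep := schroder_step_cases hc.1
      obtain ⟨w, hwQ, hwx, hwy⟩ := hI
      have hv := hmem v (List.mem_cons_of_mem _ (List.mem_cons_self))
      have hwub := hQub w hwQ
      -- establish the invariant at v
      have hIv : ∃ w ∈ Q, w.1 = v.1 ∧ v.2 < w.2 := by
        rcases hstep with ⟨h1, h2⟩ | ⟨h1, h2⟩ | ⟨h1, h2⟩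
        · -- step (0,1), same column
          refine ⟨w, hwQ, by omega, ?_⟩
          rcases eq_or_lt_of_le (show v.2 ≤ w.2 by omega) with heq | hlt
          · exact absurd (Prod.ext_iff.mpr ⟨by omega, heq⟩ : v = w) (fun hvw => hv.2 (hvw ▸ hwQ))
          · exact hlt
        all_goals
        · -- steps moving one column left
          obtain ⟨w'', hw''Q, hw''x⟩ := hQcover v.1 hv.1 (by omega)
          have hcr : w.2 ≤ w''.2 := schroder_cross Q hQchain w hwQ w'' hw''Q (by omega)
          refine ⟨w'', hw''Q, hw''x, ?_⟩
          rcases eq_or_lt_of_le (show v.2 ≤ w''.2 by omega) with heq | hlt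
          · exact absurd (Prod.ext_iff.mpr ⟨hw''x.symm, heq⟩ : v = w'') (fun hvw => hv.2 (hvw ▸ hw''Q))
          · exact hlt
      exact ih hc.2 (fun w hw => hmem w (List.mem_cons_of_mem _ hw)) v rfl hIv t ht

/-- A Schröder-type path from `src` to `tgt`. -/
def IsSchroderPath (p : List (ℤ × ℤ)) (src tgt : ℤ × ℤ) : Prop :=
  p.head? = some src ∧ p.getLast? = some tgt ∧
    p.Chain' fun u v => v - u = (0, 1) ∨ v - u = (-1, 1) ∨ v - u = (-1, 0)

theorem disjoint_family_is_schroder (n : ℕ) (P : Fin n → List (ℤ × ℤ))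
    (hpath : ∀ i : Fin n, IsSchroderPath (P i) ((i : ℤ), 0) (0, (i : ℤ)))
    (hdisj : ∀ i j : Fin n, i ≠ j → ∀ x : ℤ × ℤ, x ∈ P i → x ∉ P j) :
    ∀ i : Fin n, ∀ q ∈ P i, (i : ℤ) ≤ q.1 + q.2 := by
  suffices H : ∀ m : ℕ, ∀ i : Fin n, i.val ≤ m → ∀ q ∈ P i, (i : ℤ) ≤ q.1 + q.2 by
    exact fun i => H i.val i le_rfl
  intro m
  induction m with
  | zero =>
    intro i hi q hq
    obtain ⟨hh, ht, hc⟩ := hpath i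
    have hb1 := schroder_mono_head _ hc _ hh q hq
    have hb2 := schroder_mono_last _ hc _ ht q hq
    have hz : (i : ℤ) = 0 := by
      have : i.val = 0 := Nat.le_zero.mp hi
      simp [this]
    simp only at hb1 hb2
    omega
  | succ m ihm =>
    intro i hi q hq
    by_contra hcon
    push_neg at hcon
    obtain ⟨hh, ht, hc⟩ := hpath i
    have hb1 := schroder_mono_head _ hc _ hh q hq
    have hb2 := schroder_mono_last _ hc _ ht q hq
    simp only at hb1 hb2
    -- q.1 ≤ i, 0 ≤ q.2 ; 0 ≤ q.1, q.2 ≤ i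
    have hiv1 : (1 : ℤ) ≤ (i : ℤ) := by omega
    have hival : 1 ≤ i.val := by
      by_contra h
      have : i.val = 0 := by omega
      have : (i : ℤ) = 0 := by simp [this]
      omega
    -- the previous path
    set j : Fin n := ⟨i.val - 1, by omega⟩ with hjdef
    have hjv : (j : ℤ) = (i : ℤ) - 1 := by
      simp [hjdef]
      push_cast [Nat.cast_sub hival]
      ring
    have hne : i ≠ j := by
      intro h
      have := congrArg Fin.val h
      simp [hjdef] at this
      omega
    have hIH : ∀ w ∈ P j, (j : ℤ) ≤ w.1 + w.2 := ihm j (by simp [hjdef]; omega)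
    obtain ⟨hQh, hQt, hQc⟩ := hpath j
    have hQub : ∀ w ∈ P j, w.1 ≤ (j : ℤ) := fun w hw =>
      (schroder_mono_head _ hQc _ hQh w hw).1
    have hQy : ∀ w ∈ P j, w.2 ≤ (j : ℤ) := fun w hw =>
      (schroder_mono_last _ hQc _ hQt w hw).2
    have hQcover : ∀ c : ℤ, 0 ≤ c → c ≤ (j : ℤ) → ∃ w ∈ P j, w.1 = c := fun c h0 h1 =>
      schroder_coverage _ hQc _ hQh _ hQt c h0 h1
    have hd1 : ∀ x ∈ P i, x ∉ P j := fun x hx => hdisj i j hne x hx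
    -- suffix of P i starting at q
    obtain ⟨l1, l2, hP⟩ := List.append_of_mem hq
    have hrsub : ∀ w ∈ q :: l2, w ∈ P i := by
      intro w hw
      rw [hP]
      exact List.mem_append_right _ hw
    have hrc : (q :: l2).Chain' fun u v => v - u = (0, 1) ∨ v - u = (-1, 1) ∨ v - u = (-1, 0) := by
      rw [hP, List.Chain', List.isChain_append] at hc
      exact hc.2.1
    have hrt : (q :: l2).getLast? = some (0, (i : ℤ)) := by
      rw [hP] at ht
      rwa [List.getLast?_append_cons] at ht
    -- initial invariant at q
    have hq1 : q.1 ≤ (j : ℤ) := by omega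
    obtain ⟨w0, hw0Q, hw0x⟩ := hQcover q.1 (by omega) hq1
    have hw0s := hIH w0 hw0Q
    have hIq : ∃ w ∈ P j, w.1 = q.1 ∧ q.2 < w.2 := by
      refine ⟨w0, hw0Q, hw0x, ?_⟩
      rcases eq_or_lt_of_le (show q.2 ≤ w0.2 by omega) with heq | hlt
      · exact absurd (Prod.ext_iff.mpr ⟨hw0x.symm, heq⟩ : q = w0)
          (fun h => hd1 q hq (h ▸ hw0Q))
      · exact hlt
    obtain ⟨w, hwQ, hwx, hwy⟩ :=
      schroder_propagate (P j) (j : ℤ) hQc hQcover hQub (q :: l2) hrc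
        (fun w hw => ⟨(schroder_mono_last _ hc _ ht w (hrsub w hw)).1, hd1 w (hrsub w hw)⟩)
        q rfl hIq (0, (i : ℤ)) hrt
    have := hQy w hwQ
    simp at hwy
    omega
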